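/- Let G be a bounded Vilenkin group with sup_k m_k < ∞. There is a constant c (depending only on sup_k m_k) such that for every n ∈ ℕ_+, ‖D_n‖_{L¹(G)} ≤ c · (ρ(n) + 1), where ρ(n) = |n| − ⟨n⟩. -/

import Mathlib

open MeasureTheory Complex Real

def Mseq (m : ℕ → ℕ) : ℕ → ℕ
  | 0 => 1
  | k + 1 => m k * Mseq m k

def digit (m : ℕ → ℕ) (n j : ℕ) : ℕ := n / Mseq m j % m j

noncomputable def hi (m : ℕ → ℕ) (n : ℕ) : ℕ := sSup {j | digit m n j ≠ 0}

noncomputable def lo (m : ℕ → ℕ) (n : ℕ) : ℕ := sInf {j | digit m n j ≠ 0}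

noncomputable def rho (m : ℕ → ℕ) (n : ℕ) : ℕ := hi m n - lo m n

abbrev Gm (m : ℕ → ℕ) := ∀ k, ZMod (m k)

instance (n : ℕ) : MeasurableSpace (ZMod n) := ⊤

noncomputable def rad (m : ℕ → ℕ) (j : ℕ) (x : Gm m) : ℂ :=
  Complex.exp (2 * Real.pi * Complex.I * ((x j).val : ℂ) / (m j : ℂ))

noncomputable def vil (m : ℕ → ℕ) (n : ℕ) (x : Gm m) : ℂ :=
  ∏ᶠ j, rad m j x ^ digit m n j

noncomputable def Dker (m : ℕ → ℕ) (n : ℕ) (x : Gm m) : ℂ :=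
  ∑ k ∈ Finset.range n, vil m k x

/-- The defining property of the normalized Haar measure on the Vilenkin group:
every cylinder set `I_n(x)` has measure `1 / M_n`. -/
def IsVilenkinHaar (m : ℕ → ℕ) (μ : Measure (Gm m)) : Prop :=
  ∀ (n : ℕ) (x : Gm m), μ {y : Gm m | ∀ j < n, y j = x j} = (Mseq m n : ENNReal)⁻¹

noncomputable def vilCoeff (m : ℕ → ℕ) (μ : Measure (Gm m)) (f : Gm m → ℂ) (j : ℕ) : ℂ :=
  ∫ t, f t * (starRingEnd ℂ) (vil m j t) ∂μ

noncomputable def Svil (m : ℕ → ℕ) (μ : Measure (Gm m)) (f : Gm m → ℂ) (n : ℕ) (x : Gm m) : ℂ :=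
  ∑ j ∈ Finset.range n, vilCoeff m μ f j * vil m j x

section Aux

variable {m : ℕ → ℕ}

lemma Mseq_pos (hm : ∀ k, 2 ≤ m k) : ∀ j, 0 < Mseq m j
  | 0 => one_pos
  | (j+1) => Nat.mul_pos (by have := hm j; omega) (Mseq_pos hm j)

lemma two_pow_le_Mseq (hm : ∀ k, 2 ≤ m k) : ∀ j, 2 ^ j ≤ Mseq m j
  | 0 => le_refl 1
  | (j+1) => by
      have := two_pow_le_Mseq hm j
      calc 2 ^ (j+1) = 2 * 2 ^ j := by ring
        _ ≤ m j * Mseq m j := Nat.mul_le_mul (hm j) this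
        _ = Mseq m (j+1) := rfl

lemma lt_Mseq_self (hm : ∀ k, 2 ≤ m k) (n : ℕ) : n < Mseq m n :=
  lt_of_lt_of_le (Nat.lt_two_pow_self (n := n)) (two_pow_le_Mseq hm n)

lemma Mseq_dvd (hm : ∀ k, 2 ≤ m k) {i j : ℕ} (h : i ≤ j) : Mseq m i ∣ Mseq m j := by
  induction j with
  | zero => simpa [Nat.le_zero.mp h] using dvd_refl (Mseq m 0)
  | succ j ih =>
    rcases Nat.lt_or_ge i (j+1) with h1 | h1
    · exact dvd_mul_of_dvd_right (ih (by omega)) (m j)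
    · have : i = j + 1 := by omega
      simp [this]

lemma Mseq_le (hm : ∀ k, 2 ≤ m k) {i j : ℕ} (h : i ≤ j) : Mseq m i ≤ Mseq m j :=
  Nat.le_of_dvd (Mseq_pos hm j) (Mseq_dvd hm h)

lemma digit_lt (hm : ∀ k, 2 ≤ m k) (n j : ℕ) : digit m n j < m j :=
  Nat.mod_lt _ (by have := hm j; omega)

lemma digit_eq_zero_of_lt {n j : ℕ} (h : n < Mseq m j) : digit m n j = 0 := by
  unfold digit
  rw [Nat.div_eq_of_lt h]
  simp

lemma digit_eq_zero_of_dvd (hm : ∀ k, 2 ≤ m k) {a i : ℕ} (h : Mseq m (i+1) ∣ a) :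
    digit m a i = 0 := by
  obtain ⟨t, ht⟩ := h
  have ht' : a = Mseq m i * (m i * t) := by
    rw [ht]; show m i * Mseq m i * t = _; ring
  unfold digit
  rw [ht', Nat.mul_div_cancel_left _ (Mseq_pos hm i), Nat.mul_mod_right]

lemma mod_Mseq_succ (n L : ℕ) :
    n % Mseq m (L+1) = n % Mseq m L + digit m n L * Mseq m L := by
  show n % (m L * Mseq m L) = _
  rw [mul_comm (m L), Nat.mod_mul]
  unfold digit
  ring

lemma eq_zero_of_digits_zero (hm : ∀ k, 2 ≤ m k) {n : ℕ}
    (h : ∀ j, digit m n j = 0) : n = 0 := by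
  have key : ∀ L, n % Mseq m L = 0 := by
    intro L
    induction L with
    | zero => simp [Mseq]; omega
    | succ L ih => rw [mod_Mseq_succ, ih, h L]; simp
  have := key n
  rwa [Nat.mod_eq_of_lt (lt_Mseq_self hm n)] at this

lemma digit_mod (hm : ∀ k, 2 ≤ m k) {j L : ℕ} (hjL : j < L) (n : ℕ) :
    digit m (n % Mseq m L) j = digit m n j := by
  obtain ⟨t, ht⟩ := Mseq_dvd hm (show j + 1 ≤ L from hjL)
  set q := n / Mseq m L with hq
  set r := n % Mseq m L with hr
  have hn : n = Mseq m j * (m j * (t * q)) + r := by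
    have h1 : Mseq m L * q + r = n := Nat.div_add_mod n (Mseq m L)
    rw [← h1, ht]
    show (m j * Mseq m j * t) * q + r = _
    ring
  have : digit m n j = digit m r j := by
    unfold digit
    rw [hn, Nat.mul_add_div (Mseq_pos hm j), Nat.mul_add_mod]
  rw [this]

lemma digit_add (hm : ∀ k, 2 ≤ m k) {a b j : ℕ} (ha : Mseq m j ∣ a)
    (hb : b < Mseq m j) (i : ℕ) :
    digit m (a + b) i = digit m a i + digit m b i := by
  rcases Nat.lt_or_ge i j with hij | hij
  · -- i < j : digit a i = 0
    obtain ⟨t, ht⟩ := (Mseq_dvd hm (show i + 1 ≤ j from hij)).trans ha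
    have ha0 : digit m a i = 0 := digit_eq_zero_of_dvd hm ⟨t, ht⟩
    have ht' : a = Mseq m i * (m i * t) := by
      rw [ht]; show m i * Mseq m i * t = _; ring
    have : digit m (a + b) i = digit m b i := by
      unfold digit
      rw [ht', Nat.mul_add_div (Mseq_pos hm i), Nat.mul_add_mod]
    rw [this, ha0, Nat.zero_add]
  · -- j ≤ i : digit b i = 0
    have hbMi : b < Mseq m i := lt_of_lt_of_le hb (Mseq_le hm hij)
    have hb0 : digit m b i = 0 := digit_eq_zero_of_lt hbMi
    have hdvdmod : Mseq m j ∣ a % Mseq m i := (Nat.dvd_mod_iff (Mseq_dvd hm hij)).mpr ha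
    obtain ⟨u, hu⟩ := hdvdmod
    obtain ⟨w, hw⟩ := Mseq_dvd hm hij
    have hMj : 0 < Mseq m j := Mseq_pos hm j
    have huw : u < w := by
      have h1 : a % Mseq m i < Mseq m i := Nat.mod_lt _ (Mseq_pos hm i)
      rw [hu, hw] at h1
      exact lt_of_mul_lt_mul_left h1 (le_of_lt hMj)
    have hsmall : a % Mseq m i + b < Mseq m i := by
      calc a % Mseq m i + b < Mseq m j * u + Mseq m j := by
            rw [hu]; omega
        _ = Mseq m j * (u + 1) := by ring
        _ ≤ Mseq m j * w := Nat.mul_le_mul_left _ (by omega)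
        _ = Mseq m i := hw.symm
    have hdiv : (a + b) / Mseq m i = a / Mseq m i := by
      conv_lhs => rw [show a + b = Mseq m i * (a / Mseq m i) + (a % Mseq m i + b) by
        rw [← add_assoc, Nat.div_add_mod]]
      rw [Nat.mul_add_div (Mseq_pos hm i), Nat.div_eq_of_lt hsmall]
      simp
    have hb0' : b / Mseq m i % m i = 0 := hb0
    unfold digit
    rw [hdiv, hb0']
    omega

end Aux

section Vil

variable {m : ℕ → ℕ}

lemma vil_eq_prod (hm : ∀ k, 2 ≤ m k) {n L : ℕ} (hn : n < Mseq m L) (x : Gm m) :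
    vil m n x = ∏ j ∈ Finset.range L, rad m j x ^ digit m n j := by
  apply finprod_eq_prod_of_mulSupport_subset
  intro j hj
  simp only [Finset.coe_range, Set.mem_Iio]
  by_contra hL
  push_neg at hL
  have : digit m n j = 0 := digit_eq_zero_of_lt (lt_of_lt_of_le hn (Mseq_le hm hL))
  simp [Function.mem_mulSupport, this] at hj

lemma rad_eq (j : ℕ) (x : Gm m) :
    rad m j x = Complex.exp (((2 * Real.pi * ((x j).val : ℝ) / (m j : ℝ) : ℝ) : ℂ) * Complex.I) := by
  unfold rad
  push_cast
  ring_nf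

lemma abs_rad (j : ℕ) (x : Gm m) : ‖rad m j x‖ = 1 := by
  rw [rad_eq, Complex.norm_exp]
  simp

lemma abs_vil (hm : ∀ k, 2 ≤ m k) (n : ℕ) (x : Gm m) : ‖vil m n x‖ = 1 := by
  rw [vil_eq_prod hm (lt_Mseq_self hm n), norm_prod]
  simp [norm_pow, abs_rad]

lemma vil_mul (hm : ∀ k, 2 ≤ m k) {a b j : ℕ} (ha : Mseq m j ∣ a)
    (hb : b < Mseq m j) (x : Gm m) :
    vil m (a + b) x = vil m a x * vil m b x := by
  have h1 : a + b < Mseq m (a + b) := lt_Mseq_self hm _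
  have h2 : a < Mseq m (a + b) := lt_of_le_of_lt (Nat.le_add_right a b) h1
  have h3 : b < Mseq m (a + b) := lt_of_le_of_lt (Nat.le_add_left b a) h1
  rw [vil_eq_prod hm h1, vil_eq_prod hm h2, vil_eq_prod hm h3, ← Finset.prod_mul_distrib]
  apply Finset.prod_congr rfl
  intro i _
  rw [digit_add hm ha hb i, pow_add]

lemma block_sum (hm : ∀ k, 2 ≤ m k) {a c j : ℕ} (ha : Mseq m j ∣ a)
    (hc : c ≤ Mseq m j) (x : Gm m) :
    ∑ k ∈ Finset.range c, vil m (a + k) x = vil m a x * Dker m c x := by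
  unfold Dker
  rw [Finset.mul_sum]
  apply Finset.sum_congr rfl
  intro k hk
  exact vil_mul hm ha (lt_of_lt_of_le (Finset.mem_range.mp hk) hc) x

lemma blocks (hm : ∀ k, 2 ≤ m k) (j : ℕ) (x : Gm m) :
    ∀ d, ∑ k ∈ Finset.range (d * Mseq m j), vil m k x
      = (∑ u ∈ Finset.range d, vil m (u * Mseq m j) x) * Dker m (Mseq m j) x := by
  intro d
  induction d with
  | zero => simp
  | succ d ih =>
    rw [Nat.succ_mul, Finset.sum_range_add, ih, Finset.sum_range_succ, add_mul]
    congr 1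
    exact block_sum hm (dvd_mul_left (Mseq m j) d) le_rfl x

lemma key_ineq (hm : ∀ k, 2 ≤ m k) (x : Gm m) :
    ∀ L n, n < Mseq m L →
      ‖Dker m n x‖
        ≤ ∑ j ∈ Finset.range L, (digit m n j : ℝ) * ‖Dker m (Mseq m j) x‖ := by
  intro L
  induction L with
  | zero =>
    intro n hn
    have : n = 0 := by simpa [Mseq] using hn
    simp [this, Dker]
  | succ L ih =>
    intro n hn
    set d := n / Mseq m L with hd
    set r := n % Mseq m L with hr
    have hML : 0 < Mseq m L := Mseq_pos hm L
    have hdm : d < m L := by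
      rw [hd, Nat.div_lt_iff_lt_mul hML]
      calc n < Mseq m (L+1) := hn
        _ = m L * Mseq m L := rfl
    have hdig : digit m n L = d := Nat.mod_eq_of_lt hdm
    have hrML : r < Mseq m L := Nat.mod_lt _ hML
    have hsplit : n = d * Mseq m L + r := by
      rw [hd, hr, mul_comm]
      exact (Nat.div_add_mod n (Mseq m L)).symm
    have hdk : Dker m n x
        = (∑ u ∈ Finset.range d, vil m (u * Mseq m L) x) * Dker m (Mseq m L) x
          + vil m (d * Mseq m L) x * Dker m r x := by
      unfold Dker
      conv_lhs => rw [hsplit]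
      rw [Finset.sum_range_add, blocks hm L x d]
      congr 1
      exact block_sum hm (dvd_mul_left (Mseq m L) d) (le_of_lt hrML) x
    have habs1 : ‖(∑ u ∈ Finset.range d, vil m (u * Mseq m L) x)
        * Dker m (Mseq m L) x‖ ≤ (d : ℝ) * ‖Dker m (Mseq m L) x‖ := by
      rw [norm_mul]
      apply mul_le_mul_of_nonneg_right _ (norm_nonneg _)
      calc ‖∑ u ∈ Finset.range d, vil m (u * Mseq m L) x‖
          ≤ ∑ u ∈ Finset.range d, ‖vil m (u * Mseq m L) x‖ :=
            norm_sum_le _ _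
        _ = (d : ℝ) := by simp [abs_vil hm]
    have habs2 : ‖vil m (d * Mseq m L) x * Dker m r x‖
        = ‖Dker m r x‖ := by
      rw [norm_mul, abs_vil hm, one_mul]
    have hmain : ‖Dker m n x‖
        ≤ (d : ℝ) * ‖Dker m (Mseq m L) x‖ + ‖Dker m r x‖ := by
      rw [hdk]
      refine le_trans (norm_add_le _ _) ?_
      rw [habs2]
      exact add_le_add_left habs1 _
    have hrle := ih r hrML
    have hsum : ∑ j ∈ Finset.range L, (digit m r j : ℝ) * ‖Dker m (Mseq m j) x‖
        = ∑ j ∈ Finset.range L, (digit m n j : ℝ) * ‖Dker m (Mseq m j) x‖ := by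
      apply Finset.sum_congr rfl
      intro j hj
      rw [hr, digit_mod hm (Finset.mem_range.mp hj) n]
    rw [Finset.sum_range_succ, hdig]
    calc ‖Dker m n x‖
        ≤ (d : ℝ) * ‖Dker m (Mseq m L) x‖ + ‖Dker m r x‖ := hmain
      _ ≤ (d : ℝ) * ‖Dker m (Mseq m L) x‖
          + ∑ j ∈ Finset.range L, (digit m n j : ℝ) * ‖Dker m (Mseq m j) x‖ := by
            rw [← hsum]; exact add_le_add_right hrle _
      _ = ∑ j ∈ Finset.range L, (digit m n j : ℝ) * ‖Dker m (Mseq m j) x‖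
          + (d : ℝ) * ‖Dker m (Mseq m L) x‖ := by ring

end Vil

section DMeas

variable {m : ℕ → ℕ}

lemma rad_pow_m (hm : ∀ k, 2 ≤ m k) (j : ℕ) (x : Gm m) : rad m j x ^ (m j) = 1 := by
  have hmj : (m j : ℂ) ≠ 0 := by
    exact_mod_cast Nat.cast_ne_zero.mpr (by have := hm j; omega)
  unfold rad
  rw [← Complex.exp_nat_mul]
  have : (m j : ℂ) * (2 * Real.pi * Complex.I * ((x j).val : ℂ) / (m j : ℂ))
      = ((x j).val : ℂ) * (2 * Real.pi * Complex.I) := by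
    field_simp
  rw [this, Complex.exp_nat_mul, Complex.exp_two_pi_mul_I, one_pow]

lemma rad_ne_one (hm : ∀ k, 2 ≤ m k) {j : ℕ} {x : Gm m} (h : x j ≠ 0) :
    rad m j x ≠ 1 := by
  haveI : NeZero (m j) := ⟨by have := hm j; omega⟩
  have hv0 : 0 < (x j).val := by
    rcases Nat.eq_zero_or_pos (x j).val with h0 | h0
    · exact absurd ((ZMod.val_eq_zero _).mp h0) h
    · exact h0
  have hvm : (x j).val < m j := ZMod.val_lt (x j)
  rw [rad_eq]
  intro hone
  obtain ⟨k, hk⟩ := Complex.exp_eq_one_iff.mp hone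
  have hk' : (2 * Real.pi * ((x j).val : ℝ) / (m j : ℝ) : ℝ) = (k : ℝ) * (2 * Real.pi) := by
    have him := congrArg Complex.im hk
    simpa using him
  have hmpos : (0:ℝ) < (m j : ℝ) := by exact_mod_cast (by have := hm j; omega : 0 < m j)
  have hθpos : 0 < (2 * Real.pi * ((x j).val : ℝ) / (m j : ℝ) : ℝ) := by
    apply div_pos _ hmpos
    have : (0:ℝ) < ((x j).val : ℝ) := by exact_mod_cast hv0
    positivity
  have hθlt : (2 * Real.pi * ((x j).val : ℝ) / (m j : ℝ) : ℝ) < 2 * Real.pi := by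
    rw [div_lt_iff₀ hmpos]
    have hlt : ((x j).val : ℝ) < (m j : ℝ) := by exact_mod_cast hvm
    nlinarith [Real.pi_pos]
  have hk0 : (0:ℝ) < (k : ℝ) := by nlinarith [Real.pi_pos]
  have hk0' : (0:ℤ) < k := by exact_mod_cast hk0
  have : (1:ℝ) ≤ (k:ℝ) := by exact_mod_cast hk0'
  nlinarith [Real.pi_pos]

lemma rad_eq_one (hm : ∀ k, 2 ≤ m k) {j : ℕ} {x : Gm m} (h : x j = 0) :
    rad m j x = 1 := by
  unfold rad
  rw [h]
  simp [ZMod.val_zero]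

lemma gsum (hm : ∀ k, 2 ≤ m k) (j : ℕ) (x : Gm m) :
    ∑ u ∈ Finset.range (m j), rad m j x ^ u
      = if x j = 0 then (m j : ℂ) else 0 := by
  by_cases h : x j = 0
  · rw [if_pos h]
    simp [rad_eq_one hm h]
  · rw [if_neg h, geom_sum_eq (rad_ne_one hm h), rad_pow_m hm, sub_self, zero_div]

lemma vil_scaled (hm : ∀ k, 2 ≤ m k) {j u : ℕ} (hu : u < m j) (x : Gm m) :
    vil m (u * Mseq m j) x = rad m j x ^ u := by
  have hlt : u * Mseq m j < Mseq m (j+1) := by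
    show _ < m j * Mseq m j
    exact Nat.mul_lt_mul_of_lt_of_le hu le_rfl (Mseq_pos hm j)
  rw [vil_eq_prod hm hlt, Finset.prod_range_succ]
  have hdj : digit m (u * Mseq m j) j = u := by
    unfold digit
    rw [Nat.mul_div_cancel _ (Mseq_pos hm j), Nat.mod_eq_of_lt hu]
  have hdi : ∀ i ∈ Finset.range j, rad m i x ^ digit m (u * Mseq m j) i = 1 := by
    intro i hi
    have hii := Finset.mem_range.mp hi
    have : Mseq m (i+1) ∣ u * Mseq m j :=
      Dvd.dvd.mul_left (Mseq_dvd hm (show i + 1 ≤ j from hii)) u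
    rw [digit_eq_zero_of_dvd hm this, pow_zero]
  rw [Finset.prod_congr rfl hdi, hdj]
  simp

lemma Dker_one (x : Gm m) : Dker m 1 x = 1 := by
  unfold Dker
  rw [Finset.sum_range_one]
  unfold vil
  have : ∀ j, rad m j x ^ digit m 0 j = 1 := by
    intro j
    have : digit m 0 j = 0 := by simp [digit]
    simp [this]
  simp [this]

lemma Dker_Mseq (hm : ∀ k, 2 ≤ m k) (x : Gm m) :
    ∀ j, Dker m (Mseq m j) x = if (∀ i < j, x i = 0) then (Mseq m j : ℂ) else 0 := by
  intro j
  induction j with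
  | zero =>
    have : Mseq m 0 = 1 := rfl
    rw [this, Dker_one]
    simp
  | succ j ih =>
    have hsplit : Dker m (Mseq m (j+1)) x
        = (∑ u ∈ Finset.range (m j), rad m j x ^ u) * Dker m (Mseq m j) x := by
      unfold Dker
      have : Mseq m (j+1) = m j * Mseq m j := rfl
      rw [this, blocks hm j x (m j)]
      congr 1
      apply Finset.sum_congr rfl
      intro u hu
      exact vil_scaled hm (Finset.mem_range.mp hu) x
    rw [hsplit, gsum hm, ih]
    by_cases h1 : x j = 0
    · by_cases h2 : ∀ i < j, x i = 0
      · rw [if_pos h1, if_pos h2, if_pos (by intro i hi; rcases Nat.lt_succ_iff_lt_or_eq.mp hi with h | h; exacts [h2 i h, h ▸ h1])]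
        show _ = ((m j * Mseq m j : ℕ) : ℂ)
        push_cast
        ring
      · rw [if_pos h1, if_neg h2, if_neg (by intro hc; exact h2 fun i hi => hc i (Nat.lt_succ_of_lt hi))]
        ring
    · rw [if_neg h1, zero_mul]
      rw [if_neg (fun hc => h1 (hc j (by omega)))]

end DMeas


section Meas

variable {m : ℕ → ℕ}

lemma measurable_rad (j : ℕ) : Measurable (rad m j) := by
  have h1 : Measurable (fun x : Gm m => (((x j).val : ℕ) : ℂ)) :=
    (measurable_from_top (f := fun z : ZMod (m j) => ((z.val : ℕ) : ℂ))).comp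
      (measurable_pi_apply j)
  exact Complex.measurable_exp.comp ((h1.const_mul _).div_const _)

lemma measurable_vil (hm : ∀ k, 2 ≤ m k) (k : ℕ) : Measurable (vil m k) := by
  have : vil m k = fun x => ∏ j ∈ Finset.range k.succ, rad m j x ^ digit m k j := by
    funext x
    exact vil_eq_prod hm (lt_of_lt_of_le (lt_Mseq_self hm k) (Mseq_le hm (Nat.le_succ k))) x
  rw [this]
  exact Finset.measurable_prod _ fun j _ => (measurable_rad j).pow_const _

lemma measurable_Dker (hm : ∀ k, 2 ≤ m k) (n : ℕ) : Measurable (Dker m n) :=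
  Finset.measurable_sum _ fun k _ => measurable_vil hm k

lemma integrable_abs_Dker (hm : ∀ k, 2 ≤ m k) (μ : Measure (Gm m))
    [IsProbabilityMeasure μ] (n : ℕ) :
    Integrable (fun x => ‖Dker m n x‖) μ := by
  have hD : Integrable (Dker m n) μ := by
    refine Integrable.mono' (integrable_const (n : ℝ))
      (measurable_Dker hm n).aestronglyMeasurable (ae_of_all μ fun x => ?_)
    calc ‖Dker m n x‖ = ‖Dker m n x‖ := rfl
      _ ≤ ∑ k ∈ Finset.range n, ‖vil m k x‖ := norm_sum_le _ _
      _ = (n : ℝ) := by simp [abs_vil hm]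
  have : (fun x => ‖Dker m n x‖) = fun x => ‖Dker m n x‖ := by
    funext x; rfl
  rw [this]
  exact hD.norm

lemma integral_abs_Dker_Mseq (hm : ∀ k, 2 ≤ m k) (μ : Measure (Gm m))
    [IsProbabilityMeasure μ] (hμ : IsVilenkinHaar m μ) (j : ℕ) :
    ∫ x, ‖Dker m (Mseq m j) x‖ ∂μ = 1 := by
  set S : Set (Gm m) := {y : Gm m | ∀ i < j, y i = 0} with hS
  have hSmeas : MeasurableSet S := by
    have : S = ⋂ i ∈ Finset.range j, {y : Gm m | y i = 0} := by
      ext y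
      simp [hS]
    rw [this]
    exact MeasurableSet.biInter (Finset.range j).countable_toSet
      fun i _ => by
        have : {y : Gm m | y i = 0} = (fun y : Gm m => y i) ⁻¹' {(0 : ZMod (m i))} := rfl
        rw [this]
        exact (measurable_pi_apply i) (show MeasurableSet {(0 : ZMod (m i))} from trivial)
  have hfun : (fun x => ‖Dker m (Mseq m j) x‖)
      = S.indicator (fun _ => (Mseq m j : ℝ)) := by
    funext x
    rw [Dker_Mseq hm x j]
    by_cases h : ∀ i < j, x i = 0
    · rw [if_pos h, Set.indicator_of_mem (by exact h)]
      simp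
    · rw [if_neg h, Set.indicator_of_notMem (by exact h)]
      simp
  have hμS : μ S = ((Mseq m j : ℕ) : ENNReal)⁻¹ := by
    have := hμ j (fun _ => 0)
    simpa [hS] using this
  rw [hfun, MeasureTheory.integral_indicator_const _ hSmeas, measureReal_def, hμS]
  have hMpos : (0:ℝ) < (Mseq m j : ℝ) := by exact_mod_cast Mseq_pos hm j
  rw [smul_eq_mul, ENNReal.toReal_inv]
  simp only [ENNReal.toReal_natCast]
  exact inv_mul_cancel₀ hMpos.ne'

end Meas

section Final

variable {m : ℕ → ℕ}

lemma digit_sum_le (hm : ∀ k, 2 ≤ m k) {mstar : ℕ} (hms : ∀ k, m k ≤ mstar)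
    {n : ℕ} (hn : 1 ≤ n) (L : ℕ) :
    ∑ j ∈ Finset.range L, digit m n j ≤ mstar * (rho m n + 1) := by
  have hbdd : BddAbove {j | digit m n j ≠ 0} := by
    refine ⟨n, fun j hj => ?_⟩
    by_contra hc
    push_neg at hc
    exact hj (digit_eq_zero_of_lt (lt_of_lt_of_le (lt_Mseq_self hm n)
      (Mseq_le hm (le_of_lt hc))))
  have hne : {j | digit m n j ≠ 0}.Nonempty := by
    by_contra hc
    rw [Set.not_nonempty_iff_eq_empty] at hc
    have hz : ∀ j, digit m n j = 0 := by
      intro j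
      by_contra hj
      exact absurd (show j ∈ {j | digit m n j ≠ 0} from hj) (by rw [hc]; exact Set.notMem_empty j)
    have := eq_zero_of_digits_zero hm hz
    omega
  have hhi : hi m n ∈ {j | digit m n j ≠ 0} := Nat.sSup_mem hne hbdd
  have hlo : lo m n ∈ {j | digit m n j ≠ 0} := Nat.sInf_mem hne
  have hlohi : lo m n ≤ hi m n := le_csSup hbdd hlo
  have hsub : (Finset.range L).filter (fun j => digit m n j ≠ 0)
      ⊆ Finset.Icc (lo m n) (hi m n) := by
    intro j hj
    rw [Finset.mem_filter] at hj
    rw [Finset.mem_Icc]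
    exact ⟨Nat.sInf_le hj.2, le_csSup hbdd hj.2⟩
  calc ∑ j ∈ Finset.range L, digit m n j
      = ∑ j ∈ (Finset.range L).filter (fun j => digit m n j ≠ 0), digit m n j :=
        (Finset.sum_filter_ne_zero _).symm
    _ ≤ ∑ j ∈ Finset.Icc (lo m n) (hi m n), digit m n j :=
        Finset.sum_le_sum_of_subset hsub
    _ ≤ ∑ _j ∈ Finset.Icc (lo m n) (hi m n), mstar :=
        Finset.sum_le_sum fun j _ => le_of_lt (lt_of_lt_of_le (digit_lt hm n j) (hms j))
    _ = (Finset.Icc (lo m n) (hi m n)).card * mstar := by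
        rw [Finset.sum_const, smul_eq_mul]
    _ = (rho m n + 1) * mstar := by
        rw [Nat.card_Icc]
        unfold rho
        congr 1
        omega
    _ = mstar * (rho m n + 1) := by ring

end Final


/-- On a bounded Vilenkin group there is a constant `c`, depending only on the
bound `m_*` of the generating sequence, such that `‖D_n‖₁ ≤ c (ρ(n) + 1)`. -/
theorem stmt_12 (mstar : ℕ) :
    ∃ c : ℝ, 0 < c ∧
      ∀ (m : ℕ → ℕ), (∀ k, 2 ≤ m k) → (∀ k, m k ≤ mstar) →
        ∀ (μ : Measure (Gm m)), IsProbabilityMeasure μ → IsVilenkinHaar m μ →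
          ∀ n : ℕ, 1 ≤ n →
            ∫ x, ‖Dker m n x‖ ∂μ ≤ c * (rho m n + 1) := by
  refine ⟨(mstar + 1 : ℝ), by positivity, ?_⟩
  intro m hm hms μ hprob hhaar n hn
  haveI := hprob
  have hnM : n < Mseq m n := lt_Mseq_self hm n
  have hstep1 : ∫ x, ‖Dker m n x‖ ∂μ
      ≤ ∫ x, (∑ j ∈ Finset.range n, (digit m n j : ℝ)
          * ‖Dker m (Mseq m j) x‖) ∂μ := by
    refine integral_mono (integrable_abs_Dker hm μ n) ?_ ?_
    · exact integrable_finset_sum _ fun j _ => (integrable_abs_Dker hm μ (Mseq m j)).const_mul _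
    · intro x
      exact key_ineq hm x n n hnM
  have hstep2 : ∫ x, (∑ j ∈ Finset.range n, (digit m n j : ℝ)
        * ‖Dker m (Mseq m j) x‖) ∂μ
      = ∑ j ∈ Finset.range n, (digit m n j : ℝ) := by
    rw [integral_finset_sum _ fun j _ => (integrable_abs_Dker hm μ (Mseq m j)).const_mul _]
    apply Finset.sum_congr rfl
    intro j _
    rw [MeasureTheory.integral_const_mul, integral_abs_Dker_Mseq hm μ hhaar j, mul_one]
  have hstep3 : ∑ j ∈ Finset.range n, (digit m n j : ℝ)
      ≤ (mstar : ℝ) * (rho m n + 1) := by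
    have := digit_sum_le hm hms hn n
    calc ∑ j ∈ Finset.range n, (digit m n j : ℝ)
        = ((∑ j ∈ Finset.range n, digit m n j : ℕ) : ℝ) := by push_cast; ring
      _ ≤ ((mstar * (rho m n + 1) : ℕ) : ℝ) := by exact_mod_cast this
      _ = (mstar : ℝ) * (rho m n + 1) := by push_cast; ring
  have hfin : (mstar : ℝ) * (rho m n + 1) ≤ (mstar + 1 : ℝ) * (rho m n + 1) := by
    have h1 : (0:ℝ) ≤ (rho m n : ℝ) + 1 := by positivity
    nlinarith
  linarith
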